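/- Suppose ā > b̄ > 0 and Σᵢ pᵢ a′ᵢ = 0. Let ρ : ℝ → ℝ and ε₀ > 0 be such that for every ε ∈ (0, ε₀): ρ(ε) ∈ (0,1), b̄ + (ā + ε a′ᵢ)·ρ(ε) > 0 for all i, and Σᵢ pᵢ · (ā + ε a′ᵢ)/(b̄ + (ā + ε a′ᵢ)·ρ(ε)) = 1. Then ρ(ε) − (1 − b̄/ā) = O(ε²) as ε → 0⁺; in particular the first-order coefficient in the weak-heterogeneity expansion of the fixation probability vanishes (c₁ = 0). -/

import Mathlib

open Finset

set_option maxHeartbeats 1000000 in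
lemma key_est (m : ℕ) (p a' : Fin m → ℝ) (hp : ∀ i, 0 ≤ p i)
    (hpsum : ∑ i, p i = 1) (abar bbar M : ℝ) (hb : 0 < bbar) (hab : bbar < abar)
    (hM0 : 0 ≤ M) (hM : ∀ i, |a' i| ≤ M) (ha' : ∑ i, p i * a' i = 0)
    (ε r : ℝ) (hε : 0 < ε) (hεM : ε * M ≤ abar / 2)
    (hr0 : 0 < r) (hr1 : r < 1)
    (heq : ∑ i, p i * ((abar + ε * a' i) / (bbar + (abar + ε * a' i) * r)) = 1) :
    |r - (1 - bbar / abar)| ≤ 2 * M ^ 2 / abar ^ 2 * ε ^ 2 := by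
  have ha : 0 < abar := hb.trans hab
  set D : Fin m → ℝ := fun i => bbar + (abar + ε * a' i) * r with hD
  have hai : ∀ i, abar / 2 ≤ abar + ε * a' i := by
    intro i
    have h1 := (abs_le.1 (hM i)).1
    nlinarith
  have hDb : ∀ i, bbar ≤ D i := by
    intro i
    have := hai i
    simp only [hD]
    nlinarith
  have hDpos : ∀ i, 0 < D i := fun i => lt_of_lt_of_le hb (hDb i)
  have hDne : ∀ i, D i ≠ 0 := fun i => (hDpos i).ne'
  set d : ℝ := r - (1 - bbar / abar) with hd
  clear_value d
  set S : ℝ := ∑ i, p i / D i with hS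
  set T : ℝ := ∑ i, p i * a' i / D i with hT
  -- E1 : bbar * S = 1 - r
  have E1 : bbar * S = 1 - r := by
    have h1 : ∀ i ∈ univ, (p i * ((abar + ε * a' i) / D i)) * r
        = p i - bbar * (p i / D i) := by
      intro i _
      have h0 : bbar + (abar + ε * a' i) * r ≠ 0 := hDne i
      have key : (abar + ε * a' i) * r = D i - bbar := by simp only [hD]; ring
      calc p i * ((abar + ε * a' i) / D i) * r = p i * ((abar + ε * a' i) * r / D i) := by ring
        _ = p i - bbar * (p i / D i) := by rw [key, sub_div, div_self (hDne i)]; ring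
    have h2 := Finset.sum_congr rfl h1
    rw [← Finset.sum_mul, heq, one_mul, Finset.sum_sub_distrib, hpsum,
      ← Finset.mul_sum] at h2
    simp only [hS]
    linarith
  -- E2 : abar * S = 1 - abar * d * S - ε * r * T
  have E2 : abar * S = 1 - abar * d * S - ε * r * T := by
    have h1 : ∀ i ∈ univ, abar * (p i / D i)
        = p i - abar * d * (p i / D i) - ε * r * (p i * a' i / D i) := by
      intro i _
      have h0 : bbar + (abar + ε * a' i) * r ≠ 0 := hDne i
      simp only [hd, hD]
      field_simp [h0, ha.ne']
      ring
    have h2 := Finset.sum_congr rfl h1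
    rw [← Finset.mul_sum] at h2
    simp only [Finset.sum_sub_distrib] at h2
    rw [hpsum, ← Finset.mul_sum, ← Finset.mul_sum] at h2
    simp only [hS, hT]
    linarith [h2]
  -- hdd : abar * d = abar * r - abar + bbar
  have hdd : abar * d = abar * r - abar + bbar := by
    rw [hd]; field_simp; ring
  -- E3 : abar * d = bbar * ε * T
  have E3 : abar * d = bbar * ε * T := by
    have hc : abar * d * r = bbar * ε * T * r := by
      linear_combination (abar + abar * d) * E1 - bbar * E2 + hdd
    exact mul_right_cancel₀ hr0.ne' hc
  -- bound on T
  have hTb : |T| ≤ M * (abar * |d| + ε * M) / (abar * bbar) := by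
    have hT1 : T = ∑ i, p i * a' i * ((abar - D i) / (abar * D i)) := by
      have e0 : T = ∑ i, (p i * a' i / D i - p i * a' i / abar) := by
        rw [Finset.sum_sub_distrib, ← Finset.sum_div, ha', zero_div, sub_zero]
      rw [e0]
      refine Finset.sum_congr rfl fun i _ => ?_
      have h0 : D i ≠ 0 := hDne i
      field_simp [h0, ha.ne']
    rw [hT1]
    calc |∑ i, p i * a' i * ((abar - D i) / (abar * D i))|
        ≤ ∑ i, |p i * a' i * ((abar - D i) / (abar * D i))| :=
          Finset.abs_sum_le_sum_abs _ _
      _ ≤ ∑ i, p i * (M * (abar * |d| + ε * M) / (abar * bbar)) := by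
          refine Finset.sum_le_sum fun i _ => ?_
          rw [abs_mul, abs_mul, abs_div, abs_of_nonneg (hp i)]
          have hnum : |abar - D i| ≤ abar * |d| + ε * M := by
            have hDi : D i - abar = abar * d + ε * a' i * r := by
              rw [hd]; simp only [hD]; field_simp; ring
            have : |abar - D i| = |abar * d + ε * a' i * r| := by
              rw [← abs_neg]; congr 1; linarith [hDi]
            rw [this]
            calc |abar * d + ε * a' i * r| ≤ |abar * d| + |ε * a' i * r| :=
                  abs_add_le _ _
              _ ≤ abar * |d| + ε * M := by
                  rw [abs_mul, abs_of_nonneg ha.le, abs_mul, abs_mul,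
                    abs_of_nonneg hε.le, abs_of_nonneg hr0.le]
                  have h1 : ε * |a' i| * r ≤ ε * |a' i| * 1 :=
                    mul_le_mul_of_nonneg_left hr1.le
                      (mul_nonneg hε.le (abs_nonneg _))
                  have h2 : ε * |a' i| ≤ ε * M :=
                    mul_le_mul_of_nonneg_left (hM i) hε.le
                  nlinarith
          have hden : abar * bbar ≤ |abar * D i| := by
            rw [abs_of_pos (mul_pos ha (hDpos i))]
            have := hDb i
            nlinarith
          have h1 : |abar - D i| / |abar * D i| ≤ (abar * |d| + ε * M) / (abar * bbar) := by
            apply div_le_div₀ (by positivity) hnum (mul_pos ha hb) hden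
          calc p i * |a' i| * (|abar - D i| / |abar * D i|)
              ≤ p i * M * ((abar * |d| + ε * M) / (abar * bbar)) := by
                apply mul_le_mul (by nlinarith [hM i, abs_nonneg (a' i), hp i]) h1
                  (by positivity) (mul_nonneg (hp i) hM0)
            _ = p i * (M * (abar * |d| + ε * M) / (abar * bbar)) := by ring
      _ = M * (abar * |d| + ε * M) / (abar * bbar) := by
          rw [← Finset.sum_mul, hpsum, one_mul]
  -- finish
  have habs : abar * |d| = bbar * ε * |T| := by
    have := congrArg abs E3
    rwa [abs_mul, abs_mul, abs_mul, abs_of_nonneg ha.le, abs_of_nonneg hb.le,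
      abs_of_nonneg hε.le] at this
  have hdle : abar * |d| ≤ ε * M * |d| + ε ^ 2 * M ^ 2 / abar := by
    have h2 : bbar * ε * |T| ≤ bbar * ε * (M * (abar * |d| + ε * M) / (abar * bbar)) := by
      apply mul_le_mul_of_nonneg_left hTb (by positivity)
    rw [habs]
    calc bbar * ε * |T| ≤ bbar * ε * (M * (abar * |d| + ε * M) / (abar * bbar)) := h2
      _ = ε * M * |d| + ε ^ 2 * M ^ 2 / abar := by field_simp
  have hfin : |d| ≤ 2 * M ^ 2 / abar ^ 2 * ε ^ 2 := by
    have h3 : ε * M * |d| ≤ abar / 2 * |d| := by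
      apply mul_le_mul_of_nonneg_right hεM (abs_nonneg d)
    have h4 : abar / 2 * |d| ≤ ε ^ 2 * M ^ 2 / abar := by linarith
    have h5 : abar * (abar / 2 * |d|) ≤ abar * (ε ^ 2 * M ^ 2 / abar) :=
      mul_le_mul_of_nonneg_left h4 ha.le
    have h6 : abar * (ε ^ 2 * M ^ 2 / abar) = ε ^ 2 * M ^ 2 := by field_simp
    rw [div_mul_eq_mul_div, le_div_iff₀ (by positivity : (0:ℝ) < abar ^ 2)]
    nlinarith
  exact hfin

/-- Weak-heterogeneity expansion: the first-order coefficient vanishes, i.e.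
`ρ(ε) - (1 - bbar/abar) = O(ε²)` as `ε → 0⁺`. -/
theorem stmt_10 (m : ℕ) (hm : 1 ≤ m) (p a' : Fin m → ℝ)
    (hp : ∀ i, 0 < p i ∧ p i < 1) (hpsum : ∑ i, p i = 1)
    (abar bbar : ℝ) (hbbar : 0 < bbar) (hab : bbar < abar)
    (ha' : ∑ i, p i * a' i = 0)
    (ρ : ℝ → ℝ) (ε₀ : ℝ) (hε₀ : 0 < ε₀)
    (hρ : ∀ ε : ℝ, 0 < ε → ε < ε₀ →
      (0 < ρ ε ∧ ρ ε < 1) ∧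
      (∀ i, 0 < bbar + (abar + ε * a' i) * ρ ε) ∧
      ∑ i, p i * ((abar + ε * a' i) / (bbar + (abar + ε * a' i) * ρ ε)) = 1) :
    (fun ε => ρ ε - (1 - bbar / abar)) =O[nhdsWithin 0 (Set.Ioi 0)]
      (fun ε => ε ^ 2) := by
  have ha : 0 < abar := hbbar.trans hab
  set M : ℝ := 1 + ∑ i, |a' i| with hMdef
  have hM0 : 0 < M := by positivity
  have hM : ∀ i, |a' i| ≤ M := by
    intro i
    have h1 : |a' i| ≤ ∑ j, |a' j| :=
      Finset.single_le_sum (fun j _ => abs_nonneg (a' j)) (Finset.mem_univ i)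
    linarith
  set δ : ℝ := min ε₀ (abar / (2 * M)) with hδdef
  have hδpos : 0 < δ := lt_min hε₀ (by positivity)
  rw [Asymptotics.isBigO_iff]
  refine ⟨2 * M ^ 2 / abar ^ 2, ?_⟩
  have hmem : Set.Ioo (0:ℝ) δ ∈ nhdsWithin 0 (Set.Ioi 0) :=
    Ioo_mem_nhdsGT_of_mem ⟨le_rfl, hδpos⟩
  filter_upwards [hmem] with ε hε
  obtain ⟨hε1, hε2⟩ := hε
  have hεε₀ : ε < ε₀ := lt_of_lt_of_le hε2 (min_le_left _ _)
  obtain ⟨⟨hr0, hr1⟩, hDpos, heq⟩ := hρ ε hε1 hεε₀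
  have hεM : ε * M ≤ abar / 2 := by
    have h1 : ε < abar / (2 * M) := lt_of_lt_of_le hε2 (min_le_right _ _)
    rw [lt_div_iff₀ (by positivity)] at h1
    nlinarith
  have hkey := key_est m p a' (fun i => (hp i).1.le) hpsum abar bbar M hbbar hab
    hM0.le hM ha' ε (ρ ε) hε1 hεM hr0 hr1 heq
  rw [Real.norm_eq_abs, Real.norm_eq_abs, abs_of_nonneg (sq_nonneg ε)]
  exact hkey
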